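/- Fix an integer n ≥ 2. Let X be the limit space of an inverse system {X_α, p^β_α : α, β ∈ A} of compact Hausdorff spaces over a directed partially ordered set A, and suppose that every X_α satisfies condition (*)_n. Then X satisfies condition (*)_n. -/
import Mathlib


universe u

/-- An inverse system of compact Hausdorff spaces over a directed partially ordered
index set, with continuous bonding maps `p h : X β → X α` for `h : α ≤ β` satisfying
`p (le_refl α) = id` and `p h₁ ∘ p h₂ = p (h₁.trans h₂)`. -/
structure InvSystemCH : Type (u + 1) where
  /-- the index set -/
  A : Type u
  [ord : PartialOrder A]
  idx_nonempty : Nonempty A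
  directed : ∀ a b : A, ∃ c : A, a ≤ c ∧ b ≤ c
  /-- the spaces of the system -/
  X : A → Type u
  [topX : ∀ a : A, TopologicalSpace (X a)]
  compactX : ∀ a : A, CompactSpace (X a)
  t2X : ∀ a : A, T2Space (X a)
  /-- the bonding maps -/
  p : ∀ {a b : A}, a ≤ b → C(X b, X a)
  p_id : ∀ (a : A) (x : X a), p (le_refl a) x = x
  p_comp : ∀ {a b c : A} (h₁ : a ≤ b) (h₂ : b ≤ c) (x : X c),
    p h₁ (p h₂ x) = p (h₁.trans h₂) x

attribute [instance] InvSystemCH.ord InvSystemCH.topX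

/-- The limit space of an inverse system: the subspace of the product `∀ a, X a`
consisting of the threads, with the subspace topology. -/
abbrev InvSystemCH.Limit (S : InvSystemCH.{u}) : Type u :=
  { x : ∀ a : S.A, S.X a // ∀ (a b : S.A) (h : a ≤ b), S.p h (x b) = x a }


/-- Condition `(*)ₙ`: every continuous complex-valued function on `Y` can be uniformly
approximated by `n`-th powers of continuous complex-valued functions. -/
def SatisfiesStarN (n : ℕ) (Y : Type*) [TopologicalSpace Y] : Prop :=
  ∀ (f : C(Y, ℂ)) (ε : ℝ), 0 < ε → ∃ g : C(Y, ℂ), ∀ y : Y, ‖f y - g y ^ n‖ < ε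

namespace InvSystemCHAux

variable (S : InvSystemCH.{u})

/-- The limit projection as a continuous map. -/
def proj (a : S.A) : C(S.Limit, S.X a) :=
  ⟨fun x => x.1 a, (continuous_apply a).comp continuous_subtype_val⟩

theorem comp_proj {a c : S.A} (h : a ≤ c) (fa : C(S.X a, ℂ)) :
    fa.comp (proj S a) = (fa.comp (S.p h)).comp (proj S c) := by
  ext x
  exact congrArg fa (x.2 a c h).symm

instance : CompactSpace S.Limit := by
  haveI := S.compactX
  haveI := S.t2X
  have hset : {x : ∀ a : S.A, S.X a | ∀ (a b : S.A) (h : a ≤ b), S.p h (x b) = x a}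
      = ⋂ (a : S.A) (b : S.A) (h : a ≤ b), {x | S.p h (x b) = x a} := by
    ext x; simp [Set.mem_iInter]
  have hcl : IsClosed {x : ∀ a : S.A, S.X a | ∀ (a b : S.A) (h : a ≤ b), S.p h (x b) = x a} := by
    rw [hset]
    exact isClosed_iInter fun a => isClosed_iInter fun b => isClosed_iInter fun h =>
      isClosed_eq ((S.p h).continuous.comp (continuous_apply b)) (continuous_apply a)
  exact isCompact_iff_compactSpace.mp hcl.isCompact

instance : T2Space S.Limit := by
  haveI := S.t2X
  infer_instance

/-- The star subalgebra of functions on the limit factoring through a finite stage. -/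
noncomputable def algStage : StarSubalgebra ℂ C(S.Limit, ℂ) where
  carrier := {f | ∃ (a : S.A) (fa : C(S.X a, ℂ)), f = fa.comp (proj S a)}
  mul_mem' := by
    rintro f g ⟨a, fa, rfl⟩ ⟨b, fb, rfl⟩
    obtain ⟨c, hac, hbc⟩ := S.directed a b
    refine ⟨c, fa.comp (S.p hac) * fb.comp (S.p hbc), ?_⟩
    rw [comp_proj S hac fa, comp_proj S hbc fb]
    rfl
  add_mem' := by
    rintro f g ⟨a, fa, rfl⟩ ⟨b, fb, rfl⟩
    obtain ⟨c, hac, hbc⟩ := S.directed a b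
    refine ⟨c, fa.comp (S.p hac) + fb.comp (S.p hbc), ?_⟩
    rw [comp_proj S hac fa, comp_proj S hbc fb]
    rfl
  one_mem' := ⟨Classical.choice S.idx_nonempty, 1, rfl⟩
  algebraMap_mem' := fun c =>
    ⟨Classical.choice S.idx_nonempty, algebraMap ℂ _ c, rfl⟩
  star_mem' := by
    rintro f ⟨a, fa, rfl⟩
    exact ⟨a, star fa, rfl⟩

theorem algStage_separatesPoints : (algStage S).SeparatesPoints := by
  haveI := S.compactX
  haveI := S.t2X
  intro x y hxy
  have hex : ∃ a : S.A, x.1 a ≠ y.1 a := by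
    by_contra hall
    push_neg at hall
    exact hxy (Subtype.ext (funext hall))
  obtain ⟨a, ha⟩ := hex
  obtain ⟨u, hu0, hu1, -⟩ := exists_continuous_zero_one_of_isClosed
    (isClosed_singleton (x := x.1 a)) (isClosed_singleton (x := y.1 a))
    (Set.disjoint_singleton.mpr ha)
  set fa : C(S.X a, ℂ) :=
    (⟨Complex.ofReal, Complex.continuous_ofReal⟩ : C(ℝ, ℂ)).comp u
  refine ⟨fa.comp (proj S a), ⟨fa.comp (proj S a), ⟨a, fa, rfl⟩, rfl⟩, ?_⟩
  have hx : fa (x.1 a) = 0 := by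
    simp [fa, hu0 (Set.mem_singleton _)]
  have hy : fa (y.1 a) = 1 := by
    simp [fa, hu1 (Set.mem_singleton _)]
  show fa (x.1 a) ≠ fa (y.1 a)
  rw [hx, hy]
  exact zero_ne_one

end InvSystemCHAux

open InvSystemCHAux in
/-- if every space of an inverse system of compact Hausdorff spaces
satisfies condition `(*)ₙ`, then so does the limit space. -/
theorem satisfiesStarN_limit_of_inverseSystem
    (n : ℕ) (hn : 2 ≤ n) (S : InvSystemCH.{u})
    (hS : ∀ a : S.A, SatisfiesStarN n (S.X a)) :
    SatisfiesStarN n S.Limit := by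
  intro f ε hε
  have hdense := ContinuousMap.starSubalgebra_topologicalClosure_eq_top_of_separatesPoints
    (algStage S) (algStage_separatesPoints S)
  have hf : f ∈ closure ((algStage S : Set C(S.Limit, ℂ))) := by
    have : f ∈ (algStage S).topologicalClosure := by rw [hdense]; trivial
    exact this
  obtain ⟨h, hhA, hdist⟩ := Metric.mem_closure_iff.mp hf (ε / 2) (by positivity)
  obtain ⟨a, fa, rfl⟩ := hhA
  obtain ⟨ga, hga⟩ := hS a fa (ε / 2) (by positivity)
  refine ⟨ga.comp (proj S a), fun y => ?_⟩
  have h1 : ‖f y - fa (y.1 a)‖ ≤ dist f (fa.comp (proj S a)) := by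
    rw [← dist_eq_norm]
    exact ContinuousMap.dist_apply_le_dist (f := f) (g := fa.comp (proj S a)) y
  show ‖f y - ga (y.1 a) ^ n‖ < ε
  calc ‖f y - ga (y.1 a) ^ n‖
      = ‖(f y - fa (y.1 a)) + (fa (y.1 a) - ga (y.1 a) ^ n)‖ := by
        rw [sub_add_sub_cancel]
    _ ≤ ‖f y - fa (y.1 a)‖ + ‖fa (y.1 a) - ga (y.1 a) ^ n‖ := norm_add_le _ _
    _ < ε / 2 + ε / 2 := add_lt_add (h1.trans_lt hdist) (hga _)
    _ = ε := by ring
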